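/- For every integer d ≥ 2, writing λ_l = l(l+d−1) and λ̃_l = l(l+d−1) + d²/4 for l ∈ ℕ, the series ∑_{l=0}^∞ ((2l+d)/d)·C(d+l−1, d−1)·( λ̃_{l+1}^{−d/2} − λ̃_l^{−d/2} + (d/4)·(λ̃_{l+1}^{−1−d/2} + λ̃_l^{−1−d/2})·(λ_{l+1} − λ_l) ) converges and its sum equals 2/d!. -/

import Mathlib

/-- The eigenvalues `λ_l = l(l+d−1)` of the Laplacian on the `d`-sphere. -/
noncomputable def lam (d l : ℕ) : ℝ := (l : ℝ) * ((l : ℝ) + (d : ℝ) - 1)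

/-- The shifted energy levels `λ̃_l = l(l+d−1) + d²/4`. -/
noncomputable def lamShift (d l : ℕ) : ℝ := lam d l + (d : ℝ) ^ 2 / 4

open Filter Real Set Finset Topology

/-- convex combination bound for `t ↦ t ^ c`, `c ≤ 0`, on positive reals. -/
lemma rpow_convex_comb {c : ℝ} (hc : c ≤ 0) {u v α β : ℝ} (hu : 0 < u) (hv : 0 < v)
    (hα : 0 ≤ α) (hβ : 0 ≤ β) (hab : α + β = 1) :
    (α * u + β * v) ^ c ≤ α * u ^ c + β * v ^ c := by
  have hx : 0 < α * u + β * v := by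
    rcases lt_or_eq_of_le hα with h | h
    · nlinarith
    · have hβ1 : β = 1 := by linarith
      rw [← h, hβ1]; simpa using hv
  have hlog : α * Real.log u + β * Real.log v ≤ Real.log (α * u + β * v) := by
    have := strictConcaveOn_log_Ioi.concaveOn.2 (mem_Ioi.2 hu) (mem_Ioi.2 hv) hα hβ hab
    simpa [smul_eq_mul] using this
  have h1 : (α * u + β * v) ^ c = Real.exp (c * Real.log (α * u + β * v)) := by
    rw [Real.rpow_def_of_pos hx]; ring_nf
  have h2 : c * Real.log (α * u + β * v) ≤ c * (α * Real.log u + β * Real.log v) := by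
    exact mul_le_mul_of_nonpos_left hlog hc
  have h3 : Real.exp (α * (c * Real.log u) + β * (c * Real.log v)) ≤
      α * Real.exp (c * Real.log u) + β * Real.exp (c * Real.log v) := by
    have := convexOn_exp.2 (mem_univ (c * Real.log u)) (mem_univ (c * Real.log v)) hα hβ hab
    simpa [smul_eq_mul] using this
  calc (α * u + β * v) ^ c = Real.exp (c * Real.log (α * u + β * v)) := h1
    _ ≤ Real.exp (c * (α * Real.log u + β * Real.log v)) := Real.exp_le_exp.2 h2
    _ = Real.exp (α * (c * Real.log u) + β * (c * Real.log v)) := by ring_nf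
    _ ≤ α * Real.exp (c * Real.log u) + β * Real.exp (c * Real.log v) := h3
    _ = α * u ^ c + β * v ^ c := by
        rw [Real.rpow_def_of_pos hu, Real.rpow_def_of_pos hv]; ring_nf

/-- trapezoid inequality. -/
lemma key_ineq {p u v : ℝ} (hp : 1 ≤ p) (hu : 0 < u) (huv : u ≤ v) :
    u ^ (-p) - v ^ (-p) ≤ p / 2 * (v - u) * (u ^ (-1 - p) + v ^ (-1 - p)) := by
  rcases eq_or_lt_of_le huv with rfl | hlt
  · simp
  have hv : 0 < v := hu.trans hlt
  have hvu : 0 < v - u := by linarith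
  have hne : (-1 - p) ≠ -1 := by intro h; nlinarith
  have h0 : (0:ℝ) ∉ uIcc u v := by
    rw [Set.uIcc_of_le huv]; intro h; exact absurd (mem_Icc.1 h).1 (by linarith)
  have hint : ∫ t in u..v, t ^ (-1 - p) = (v ^ (-p) - u ^ (-p)) / (-p) := by
    rw [integral_rpow (Or.inr ⟨hne, h0⟩), show (-1 - p + 1) = -p by ring]
  -- chord function
  set A := u ^ (-1 - p) with hA
  set B := v ^ (-1 - p) with hB
  have hmono : ∫ t in u..v, t ^ (-1 - p) ≤
      ∫ t in u..v, ((v - t) * A + (t - u) * B) / (v - u) := by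
    apply intervalIntegral.integral_mono_on huv
    · apply ContinuousOn.intervalIntegrable
      apply ContinuousOn.rpow_const continuousOn_id
      intro t ht
      rw [Set.uIcc_of_le huv] at ht
      have h1 := (mem_Icc.1 ht).1
      exact Or.inl (by intro h; simp only [id_eq] at h; nlinarith)
    · apply ContinuousOn.intervalIntegrable
      fun_prop
    · intro t ht
      obtain ⟨htu, htv⟩ := mem_Icc.1 ht
      have h1 : t = ((v - t)/(v - u)) * u + ((t - u)/(v - u)) * v := by
        field_simp; ring
      have h2 := rpow_convex_comb (α := (v - t)/(v - u)) (β := (t - u)/(v - u))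
        (by linarith : -1 - p ≤ 0) hu hv
        (div_nonneg (by linarith) (by linarith)) (div_nonneg (by linarith) (by linarith))
        (by field_simp; ring)
      rw [← h1] at h2
      calc t ^ (-1 - p) ≤ (v - t)/(v - u) * u ^ (-1-p) + (t - u)/(v - u) * v ^ (-1-p) := h2
        _ = ((v - t) * A + (t - u) * B) / (v - u) := by rw [hA, hB]; ring
  have hrhs : ∫ t in u..v, ((v - t) * A + (t - u) * B) / (v - u) = (v - u) * (A + B) / 2 := by
    have : (fun t => ((v - t) * A + (t - u) * B) / (v - u)) =
        (fun t => (v * A - u * B) / (v - u) + ((B - A) / (v - u)) * t) := by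
      funext t; field_simp; ring
    rw [this, intervalIntegral.integral_add (intervalIntegrable_const)
      ((intervalIntegral.intervalIntegrable_id).const_mul _),
      intervalIntegral.integral_const, intervalIntegral.integral_const_mul, integral_id]
    have hvu0 : v - u ≠ 0 := hvu.ne'
    simp only [smul_eq_mul]
    field_simp
    ring
  have hp0 : 0 < p := by linarith
  have hpne : p ≠ 0 := by linarith
  have := mul_le_mul_of_nonneg_left (hmono.trans_eq hrhs) hp0.le
  rw [hint] at this
  calc u ^ (-p) - v ^ (-p) = p * ((v ^ (-p) - u ^ (-p)) / (-p)) := by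
        rw [div_neg, mul_neg, ← mul_div_assoc, mul_div_cancel_left₀ _ hpne]; ring
    _ ≤ p * ((v - u) * (A + B) / 2) := this
    _ = p / 2 * (v - u) * (A + B) := by ring

lemma choose_id (d l : ℕ) (hd : 2 ≤ d) :
    (l + 1) * Nat.choose (d + l) (d - 1) = (d + l) * Nat.choose (d + l - 1) (d - 1) := by
  obtain ⟨e, rfl⟩ : ∃ e, d = e + 1 := ⟨d - 1, by omega⟩
  have h4 : e + 1 + l - 1 = e + l := by omega
  have h5 : e + 1 + l = e + l + 1 := by omega
  have h6 : e + 1 - 1 = e := by omega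
  rw [h4, h5, h6]
  have h1 := Nat.add_one_mul_choose_eq (e + l) e
  have h2 := Nat.choose_succ_right_eq (e + l + 1) e
  have h3 : e + l + 1 - e = l + 1 := by omega
  rw [h3] at h2
  calc (l + 1) * (e + l + 1).choose e = (e + l + 1).choose e * (l + 1) := Nat.mul_comm _ _
    _ = (e + l + 1).choose (e + 1) * (e + 1) := h2.symm
    _ = (e + l + 1) * (e + l).choose e := h1.symm

lemma choose_prod (m : ℕ) : ∀ n : ℕ,
    Nat.choose (n + m) m * Nat.factorial m = ∏ j ∈ Finset.range m, (n + j + 1) := by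
  induction m with
  | zero => simp
  | succ m ih =>
    intro n
    have h1 := Nat.add_one_mul_choose_eq (n + m) m
    have h2 : n + (m + 1) = n + m + 1 := by omega
    rw [h2, Finset.prod_range_succ, ← ih n, Nat.factorial_succ]
    have : (n + m + 1).choose (m + 1) * ((m + 1) * m.factorial)
        = ((n + m + 1).choose (m + 1) * (m + 1)) * m.factorial := by ring
    rw [this, ← h1]
    ring

lemma lamShift_pos (d l : ℕ) (hd : 2 ≤ d) : 0 < lamShift d l := by
  have h1 : (1:ℝ) ≤ (d:ℝ) := by exact_mod_cast Nat.one_le_of_lt hd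
  have h2 : (0:ℝ) ≤ lam d l := by
    unfold lam
    have : (0:ℝ) ≤ (l:ℝ) := Nat.cast_nonneg l
    nlinarith
  unfold lamShift
  nlinarith

lemma rpow_step (x : ℝ) (hx : 0 < x) (d : ℕ) :
    x ^ (-(d:ℝ)/2) = x * x ^ (-1 - (d:ℝ)/2) := by
  have : x ^ (-1 - (d:ℝ)/2) = x ^ (-(d:ℝ)/2) * x ^ (-1:ℝ) := by
    rw [← Real.rpow_add hx]; ring_nf
  rw [this, Real.rpow_neg_one]
  field_simp

section Tel
variable (d : ℕ)

noncomputable def F (l : ℕ) : ℝ :=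
  ((2 * (l : ℝ) + (d : ℝ)) / (d : ℝ)) * (Nat.choose (d + l - 1) (d - 1) : ℝ) *
    (lamShift d (l + 1) ^ (-(d : ℝ) / 2) - lamShift d l ^ (-(d : ℝ) / 2) +
      ((d : ℝ) / 4) *
        (lamShift d (l + 1) ^ (-1 - (d : ℝ) / 2) + lamShift d l ^ (-1 - (d : ℝ) / 2)) *
        (lam d (l + 1) - lam d l))

noncomputable def B (n : ℕ) : ℝ :=
  ((2 * (n : ℝ) + (d : ℝ)) / (d : ℝ)) * (Nat.choose (d + n - 1) (d - 1) : ℝ) *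
    (lamShift d (n + 1) ^ (-(d : ℝ) / 2) +
      ((d : ℝ) / 4) * (2 * (n : ℝ) + (d : ℝ)) * lamShift d (n + 1) ^ (-1 - (d : ℝ) / 2))

lemma lam_diff (l : ℕ) : lam d (l + 1) - lam d l = 2 * (l:ℝ) + d := by
  unfold lam; push_cast; ring

lemma F_zero (hd : 2 ≤ d) : F d 0 = B d 0 := by
  have h0 : lamShift d 0 = (d:ℝ)^2/4 := by unfold lamShift lam; push_cast; ring
  have hpos := lamShift_pos d 0 hd
  have hstep := rpow_step (lamShift d 0) hpos d
  unfold F B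
  rw [lam_diff]
  rw [hstep]
  rw [h0]
  push_cast
  ring

lemma F_succ (hd : 2 ≤ d) (l : ℕ) : F d (l + 1) = B d (l + 1) - B d l := by
  have hd0 : (d:ℝ) ≠ 0 := by positivity
  have hpos := lamShift_pos d (l + 1) hd
  have hstep := rpow_step (lamShift d (l + 1)) hpos d
  have hC : ((l:ℝ) + 1) * (Nat.choose (d + l) (d - 1) : ℝ)
      = ((d:ℝ) + l) * (Nat.choose (d + l - 1) (d - 1) : ℝ) := by
    exact_mod_cast congrArg (Nat.cast : ℕ → ℝ) (choose_id d l hd)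
  have hidx : d + (l + 1) - 1 = d + l := by omega
  have hlv : lamShift d (l + 1) = ((l:ℝ) + 1) * ((l:ℝ) + d) + (d:ℝ)^2/4 := by
    unfold lamShift lam; push_cast; ring
  set c1 := (Nat.choose (d + l) (d - 1) : ℝ) with hc1
  set c0 := (Nat.choose (d + l - 1) (d - 1) : ℝ) with hc0
  have key : ((2*((l:ℝ)+1)+(d:ℝ))/(d:ℝ))*c1*(-(lamShift d (l+1)) + ((d:ℝ)/4)*(2*((l:ℝ)+1)+(d:ℝ)))
      = -(((2*(l:ℝ)+(d:ℝ))/(d:ℝ))*c0*((lamShift d (l+1)) + ((d:ℝ)/4)*(2*(l:ℝ)+(d:ℝ)))) := by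
    rw [hlv]
    linear_combination (-(2*(l:ℝ)+2+(d:ℝ))*(2*(l:ℝ)+(d:ℝ))/(2*(d:ℝ))) * hC
  unfold F B
  rw [lam_diff, hidx, hstep]
  push_cast
  linear_combination (lamShift d (l + 1) ^ (-1 - (d:ℝ)/2)) * key

end Tel

section Lim
variable (d : ℕ)

lemma lamShift_lb (hd : 2 ≤ d) (n : ℕ) : ((n:ℝ)+1)^2 ≤ lamShift d (n+1) := by
  have h1 : (2:ℝ) ≤ (d:ℝ) := by exact_mod_cast hd
  have hval : lamShift d (n+1) = ((n:ℝ)+1)*((n:ℝ)+(d:ℝ)) + (d:ℝ)^2/4 := by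
    unfold lamShift lam; push_cast; ring
  rw [hval]
  have hn : (0:ℝ) ≤ (n:ℝ) := Nat.cast_nonneg n
  nlinarith

lemma lin_div (hd : 2 ≤ d) (α β : ℝ) :
    Tendsto (fun n : ℕ => (α * (n:ℝ) + β) / lamShift d (n+1)) atTop (𝓝 0) := by
  apply squeeze_zero_norm (a := fun n : ℕ => (|α| + |β|) / ((n:ℝ)+1))
  · intro n
    have hlb := lamShift_lb d hd n
    have hpos := lamShift_pos d (n+1) hd
    have hn1 : (0:ℝ) < (n:ℝ)+1 := by positivity
    rw [Real.norm_eq_abs, abs_div, abs_of_pos hpos]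
    rw [div_le_div_iff₀ hpos hn1]
    have h1 : |α * (n:ℝ) + β| ≤ (|α| + |β|) * ((n:ℝ)+1) := by
      calc |α * (n:ℝ) + β| ≤ |α * (n:ℝ)| + |β| := abs_add_le _ _
        _ = |α| * (n:ℝ) + |β| := by rw [abs_mul, abs_of_nonneg (Nat.cast_nonneg n : (0:ℝ) ≤ n)]
        _ ≤ (|α| + |β|) * ((n:ℝ)+1) := by
            have := abs_nonneg α; have := abs_nonneg β
            nlinarith [Nat.cast_nonneg (α := ℝ) n]
    calc |α * (n:ℝ) + β| * ((n:ℝ)+1) ≤ (|α| + |β|) * ((n:ℝ)+1) * ((n:ℝ)+1) := by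
          apply mul_le_mul_of_nonneg_right h1 hn1.le
      _ = (|α| + |β|) * ((n:ℝ)+1)^2 := by ring
      _ ≤ (|α| + |β|) * lamShift d (n+1) := by
          apply mul_le_mul_of_nonneg_left hlb (by positivity)
  · have h := tendsto_const_div_atTop_nhds_zero_nat (|α| + |β|)
    have h2 := (tendsto_add_atTop_iff_nat 1).2 h
    apply h2.congr
    intro n; push_cast; ring_nf

lemma fac (hd : 2 ≤ d) (c : ℝ) (hc : 0 ≤ c) :
    Tendsto (fun n : ℕ => ((n:ℝ) + c) / Real.sqrt (lamShift d (n+1))) atTop (𝓝 1) := by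
  have h1 : ∀ n : ℕ, ((n:ℝ) + c) / Real.sqrt (lamShift d (n+1))
      = Real.sqrt (((n:ℝ) + c)^2 / lamShift d (n+1)) := by
    intro n
    rw [Real.sqrt_div (by positivity), Real.sqrt_sq (by positivity)]
  have h2 : ∀ n : ℕ, ((n:ℝ) + c)^2 / lamShift d (n+1)
      = 1 + ((2*c - (d:ℝ) - 1) * (n:ℝ) + (c^2 - (d:ℝ) - (d:ℝ)^2/4)) / lamShift d (n+1) := by
    intro n
    have hpos := lamShift_pos d (n+1) hd
    have hval : lamShift d (n+1) = ((n:ℝ)+1)*((n:ℝ)+(d:ℝ)) + (d:ℝ)^2/4 := by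
      unfold lamShift lam; push_cast; ring
    rw [hval]
    have hne : ((n:ℝ)+1)*((n:ℝ)+(d:ℝ)) + (d:ℝ)^2/4 ≠ 0 := by rw [← hval]; exact hpos.ne'
    field_simp
    ring
  have h3 : Tendsto (fun n : ℕ => ((n:ℝ) + c)^2 / lamShift d (n+1)) atTop (𝓝 1) := by
    have := (tendsto_const_nhds (x := (1:ℝ))).add (lin_div d hd (2*c - (d:ℝ) - 1) (c^2 - (d:ℝ) - (d:ℝ)^2/4))
    rw [add_zero] at this
    exact this.congr (fun n => (h2 n).symm)
  have h4 := h3.sqrt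
  rw [Real.sqrt_one] at h4
  exact h4.congr (fun n => (h1 n).symm)

lemma T_eq (hd : 2 ≤ d) (n : ℕ) :
    ((2 * (n:ℝ) + (d:ℝ)) / (d:ℝ)) * (Nat.choose (d + n - 1) (d - 1) : ℝ) *
      lamShift d (n+1) ^ (-(d:ℝ)/2)
    = (2 / (Nat.factorial d : ℝ)) * (((n:ℝ) + (d:ℝ)/2) / Real.sqrt (lamShift d (n+1))) *
      ∏ j ∈ Finset.range (d-1), (((n:ℝ) + (j:ℝ) + 1) / Real.sqrt (lamShift d (n+1))) := by
  have hpos := lamShift_pos d (n+1) hd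
  set s := Real.sqrt (lamShift d (n+1)) with hs
  have hspos : 0 < s := Real.sqrt_pos.2 hpos
  have hd0 : (0:ℝ) < (d:ℝ) := by positivity
  -- rpow to pow of sqrt
  have hpow : lamShift d (n+1) ^ (-(d:ℝ)/2) = (s ^ d)⁻¹ := by
    rw [show (-(d:ℝ)/2) = -((d:ℝ)/2) by ring, Real.rpow_neg hpos.le]
    congr 1
    rw [hs, Real.sqrt_eq_rpow, ← Real.rpow_natCast (lamShift d (n+1) ^ ((1:ℝ)/2)) d,
      ← Real.rpow_mul hpos.le]
    congr 1
    ring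
  -- product formula for the binomial coefficient
  have hcp := choose_prod (d - 1) n
  have hidx : d + n - 1 = n + (d - 1) := by omega
  have hprod : (Nat.choose (d + n - 1) (d - 1) : ℝ) * (Nat.factorial (d - 1) : ℝ)
      = ∏ j ∈ Finset.range (d-1), ((n:ℝ) + (j:ℝ) + 1) := by
    rw [hidx]
    exact_mod_cast congrArg (Nat.cast : ℕ → ℝ) hcp
  have hfac : (Nat.factorial d : ℝ) = (d:ℝ) * (Nat.factorial (d - 1) : ℝ) := by
    exact_mod_cast congrArg (Nat.cast : ℕ → ℝ) (Nat.mul_factorial_pred (by omega)).symm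
  have hsd : s * s ^ (d - 1) = s ^ d := by
    rw [← pow_succ']; congr 1; omega
  have hfacpos : (0:ℝ) < (Nat.factorial (d-1) : ℝ) := by positivity
  rw [hpow, Finset.prod_div_distrib, Finset.prod_const, Finset.card_range, ← hprod, hfac, ← hsd]
  field_simp

end Lim

lemma B_tendsto (d : ℕ) (hd : 2 ≤ d) :
    Tendsto (B d) atTop (𝓝 (2 / (Nat.factorial d : ℝ))) := by
  have hT : Tendsto (fun n : ℕ => ((2*(n:ℝ)+(d:ℝ))/(d:ℝ)) * (Nat.choose (d+n-1) (d-1) : ℝ) *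
      lamShift d (n+1) ^ (-(d:ℝ)/2)) atTop (𝓝 (2 / (Nat.factorial d : ℝ))) := by
    have h0 := fac d hd ((d:ℝ)/2) (by positivity)
    have hj : ∀ j ∈ Finset.range (d-1), Tendsto (fun n : ℕ =>
        ((n:ℝ) + (j:ℝ) + 1) / Real.sqrt (lamShift d (n+1))) atTop (𝓝 1) := by
      intro j _
      have h := fac d hd ((j:ℝ)+1) (by positivity)
      exact h.congr (fun n => by ring_nf)
    have hp := tendsto_finset_prod (Finset.range (d-1)) hj
    have hmain := ((tendsto_const_nhds (x := 2 / (Nat.factorial d : ℝ))).mul h0).mul hp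
    rw [mul_one, Finset.prod_const_one, mul_one] at hmain
    exact hmain.congr (fun n => (T_eq d hd n).symm)
  have h2 := (tendsto_const_nhds (x := (1:ℝ))).add (lin_div d hd ((d:ℝ)/2) ((d:ℝ)^2/4))
  rw [add_zero] at h2
  have hmul := hT.mul h2
  rw [mul_one] at hmul
  apply hmul.congr
  intro n
  have hpos := lamShift_pos d (n+1) hd
  have hstep := rpow_step (lamShift d (n+1)) hpos d
  unfold B
  rw [hstep]
  field_simp
  ring

lemma F_nonneg (d : ℕ) (hd : 2 ≤ d) (l : ℕ) : 0 ≤ F d l := by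
  unfold F
  apply mul_nonneg
  · positivity
  · have hdr : (2:ℝ) ≤ (d:ℝ) := by exact_mod_cast hd
    have hp : (1:ℝ) ≤ (d:ℝ)/2 := by linarith
    have hu := lamShift_pos d l hd
    have hdiff : lamShift d (l+1) - lamShift d l = 2*(l:ℝ)+(d:ℝ) := by
      have := lam_diff d l
      unfold lamShift
      linarith
    have huv : lamShift d l ≤ lamShift d (l+1) := by
      have hln : (0:ℝ) ≤ (l:ℝ) := Nat.cast_nonneg l
      linarith
    have hk := key_ineq hp hu huv
    rw [hdiff] at hk
    rw [lam_diff, show -(d:ℝ)/2 = -((d:ℝ)/2) by ring]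
    linarith

lemma sum_eq (d : ℕ) (hd : 2 ≤ d) (n : ℕ) :
    ∑ l ∈ Finset.range (n+1), F d l = B d n := by
  induction n with
  | zero => simpa using F_zero d hd
  | succ n ih => rw [Finset.sum_range_succ, ih, F_succ d hd n]; ring

theorem sum_rule_sphere (d : ℕ) (hd : 2 ≤ d) :
    HasSum
      (fun l : ℕ =>
        ((2 * (l : ℝ) + (d : ℝ)) / (d : ℝ)) * (Nat.choose (d + l - 1) (d - 1) : ℝ) *
          (lamShift d (l + 1) ^ (-(d : ℝ) / 2) - lamShift d l ^ (-(d : ℝ) / 2) +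
            ((d : ℝ) / 4) *
              (lamShift d (l + 1) ^ (-1 - (d : ℝ) / 2) + lamShift d l ^ (-1 - (d : ℝ) / 2)) *
              (lam d (l + 1) - lam d l)))
      (2 / (Nat.factorial d : ℝ)) := by
  have h : HasSum (F d) (2 / (Nat.factorial d : ℝ)) := by
    rw [hasSum_iff_tendsto_nat_of_nonneg (F_nonneg d hd) _]
    apply (tendsto_add_atTop_iff_nat 1).1
    exact (B_tendsto d hd).congr (fun n => (sum_eq d hd n).symm)
  exact h
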